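/- arXiv:1408.2662 — 7 statements merged into one kernel-verified Lean document; each statement's English description precedes it below -/
import Mathlib

section
/- Any k-CNF formula on n variables has at most 2^{(1 - 1/k)n} isolated satisfying assignments, where a satisfying assignment is isolated if flipping the value of any single variable yields a non-satisfying assignment. -/
variable {V : Type*}

abbrev Lit (V : Type*) := V × Bool

def evalLit (α : V → Bool) (l : Lit V) : Bool := α l.1 == l.2

abbrev Clause2 (V : Type*) := Lit V × Lit V
abbrev CNF2 (V : Type*) := List (Clause2 V)
abbrev CNF (V : Type*) := List (List (Lit V))

def sat2 (α : V → Bool) (F : CNF2 V) : Prop :=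
  ∀ c ∈ F, evalLit α c.1 = true ∨ evalLit α c.2 = true

def satCNF (α : V → Bool) (F : CNF V) : Prop :=
  ∀ C ∈ F, ∃ l ∈ C, evalLit α l = true

def kCNF (k : ℕ) (F : CNF V) : Prop := ∀ C ∈ F, C.length ≤ k

def extendsR (α : V → Bool) (ρ : V → Option Bool) : Prop :=
  ∀ v b, ρ v = some b → α v = b

def unfix [DecidableEq V] (ρ : V → Option Bool) (v : V) : V → Option Bool :=
  Function.update ρ v none

def implicant2 (ρ : V → Option Bool) (F : CNF2 V) : Prop :=
  ∀ α, extendsR α ρ → sat2 α F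

def primeImplicant2 [DecidableEq V] (ρ : V → Option Bool) (F : CNF2 V) : Prop :=
  implicant2 ρ F ∧ ∀ v, ρ v ≠ none → ¬ implicant2 (unfix ρ v) F

def partialPI [DecidableEq V] (ρ : V → Option Bool) (F : CNF2 V) : Prop :=
  primeImplicant2 ρ F ∧ ∃ v, ρ v = none

def implicantC (ρ : V → Option Bool) (F : CNF V) : Prop :=
  ∀ α, extendsR α ρ → satCNF α F

def primeImplicantC [DecidableEq V] (ρ : V → Option Bool) (F : CNF V) : Prop :=
  implicantC ρ F ∧ ∀ v, ρ v ≠ none → ¬ implicantC (unfix ρ v) F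

def implicantF (ρ : V → Option Bool) (f : (V → Bool) → Bool) : Prop :=
  ∀ α, extendsR α ρ → f α = true

def primeImplicantF [DecidableEq V] (ρ : V → Option Bool) (f : (V → Bool) → Bool) : Prop :=
  implicantF ρ f ∧ ∀ v, ρ v ≠ none → ¬ implicantF (unfix ρ v) f

def negLit (l : Lit V) : Lit V := (l.1, !l.2)

def edge (F : CNF2 V) (u v : Lit V) : Prop :=
  ∃ c ∈ F, (u = negLit c.1 ∧ v = c.2) ∨ (u = negLit c.2 ∧ v = c.1)

def impliesL (F : CNF2 V) : Lit V → Lit V → Prop := Relation.TransGen (edge F)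

def onCycle (F : CNF2 V) (u : Lit V) : Prop := impliesL F u u

def acyclicD (F : CNF2 V) : Prop := ∀ u, ¬ onCycle F u

def looplessD (F : CNF2 V) : Prop := ∀ u, ¬ edge F u u

def litVal (ρ : V → Option Bool) (l : Lit V) : Option Bool := (ρ l.1).map (· == l.2)

def Aset (ρ : V → Option Bool) : Set (Lit V) := {l | litVal ρ l = some false}
def Bset (ρ : V → Option Bool) : Set (Lit V) := {l | litVal ρ l = some true}
def Cset (ρ : V → Option Bool) : Set (Lit V) := {l | litVal ρ l = none}

def Nminus (F : CNF2 V) (S : Set (Lit V)) : Set (Lit V) :=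
  {u | u ∉ S ∧ ∃ v ∈ S, impliesL F u v}
def Nplus (F : CNF2 V) (S : Set (Lit V)) : Set (Lit V) :=
  {v | v ∉ S ∧ ∃ u ∈ S, impliesL F u v}

def Tfml (m : ℕ) : CNF2 (Fin m × Fin 3) :=
  (List.finRange m).flatMap (fun i =>
    [(((i, 0), true), ((i, 1), true)),
     (((i, 1), true), ((i, 2), true)),
     (((i, 0), true), ((i, 2), true))])

def adjVar (F : CNF2 V) (x y : V) : Prop :=
  x ≠ y ∧ ∃ u v : Lit V, u.1 = x ∧ v.1 = y ∧ (impliesL F u v ∨ impliesL F v u)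
section IsolatedAux

open Finset

variable {n : ℕ}

private def varsOf (C : List (Lit (Fin n))) : Finset (Fin n) := (C.map Prod.fst).toFinset

private def ForcedP (F : CNF (Fin n)) (π : Equiv.Perm (Fin n)) (α : Fin n → Bool)
    (v : Fin n) : Prop :=
  ∃ C ∈ F, (v, α v) ∈ C ∧ ∀ l ∈ C,
    (l.1 = v → l.2 = α v) ∧ (l.1 ≠ v → evalLit α l = false ∧ π.symm l.1 < π.symm v)

private noncomputable def forcedSet (F : CNF (Fin n)) (π : Equiv.Perm (Fin n))
    (α : Fin n → Bool) : Finset (Fin n) :=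
  @Finset.filter _ (ForcedP F π α) (Classical.decPred _) univ

private lemma mem_forcedSet {F : CNF (Fin n)} {π : Equiv.Perm (Fin n)} {α : Fin n → Bool}
    {v : Fin n} : v ∈ forcedSet F π α ↔ ForcedP F π α v := by
  simp [forcedSet]

private lemma evalLit_update_ne {α : Fin n → Bool} {v : Fin n} {b : Bool} {l : Lit (Fin n)}
    (h : l.1 ≠ v) : evalLit (Function.update α v b) l = evalLit α l := by
  simp [evalLit, Function.update_of_ne h]

/-- existence of a critical clause for variable `v` at an isolated solution. -/
private lemma critical {F : CNF (Fin n)} {α : Fin n → Bool}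
    (hsat : satCNF α F) {v : Fin n}
    (hiso : ¬ satCNF (Function.update α v (!(α v))) F) :
    ∃ C ∈ F, (v, α v) ∈ C ∧ ∀ l ∈ C,
      (l.1 = v → l.2 = α v) ∧ (l.1 ≠ v → evalLit α l = false) := by
  unfold satCNF at hiso
  push_neg at hiso
  obtain ⟨C, hC, hall⟩ := hiso
  have hfalse : ∀ l ∈ C, evalLit (Function.update α v (!(α v))) l = false := by
    intro l hl
    have := hall l hl
    simpa [Bool.not_eq_true] using this
  have hkey : ∀ l ∈ C, (l.1 = v → l.2 = α v) ∧ (l.1 ≠ v → evalLit α l = false) := by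
    intro l hl
    constructor
    · intro h1
      have hf := hfalse l hl
      rw [evalLit, h1, Function.update_self] at hf
      cases hαv : α v <;> cases hl2 : l.2 <;> simp_all
    · intro h1
      rw [← evalLit_update_ne (b := !(α v)) h1]
      exact hfalse l hl
  obtain ⟨l, hl, hlt⟩ := hsat C hC
  have hl1 : l.1 = v := by
    by_contra h1
    rw [← evalLit_update_ne (b := !(α v)) h1] at hlt
    rw [hfalse l hl] at hlt
    exact Bool.false_ne_true hlt
  have hl2 : l.2 = α v := (hkey l hl).1 hl1
  have hlv : l = (v, α v) := by
    cases l
    simp_all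
  exact ⟨C, hC, hlv ▸ hl, hkey⟩

private lemma last_forced {F : CNF (Fin n)} {α : Fin n → Bool} {v : Fin n}
    {C : List (Lit (Fin n))} (hC : C ∈ F) (hv : (v, α v) ∈ C)
    (hcrit : ∀ l ∈ C, (l.1 = v → l.2 = α v) ∧ (l.1 ≠ v → evalLit α l = false))
    {π : Equiv.Perm (Fin n)}
    (hlast : ∀ w ∈ varsOf C, w ≠ v → π.symm w < π.symm v) :
    ForcedP F π α v :=
  ⟨C, hC, hv, fun l hl => ⟨(hcrit l hl).1, fun h => ⟨(hcrit l hl).2 h,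
    hlast l.1 (by simp only [varsOf, List.mem_toFinset, List.mem_map]; exact ⟨l, hl, rfl⟩) h⟩⟩⟩

/-- the number of permutations for which `v` comes last among `W`, times `|W|`, is `n!`. -/
private lemma count_last_mul (W : Finset (Fin n)) {v : Fin n} (hv : v ∈ W) :
    (@Finset.filter _ (fun π : Equiv.Perm (Fin n) =>
        ∀ w ∈ W, w ≠ v → π.symm w < π.symm v) (Classical.decPred _) univ).card * W.card
      = Fintype.card (Equiv.Perm (Fin n)) := by
  classical
  set P : Fin n → Equiv.Perm (Fin n) → Prop :=
    fun u π => ∀ w ∈ W, w ≠ u → π.symm w < π.symm u with hP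
  have hWne : W.Nonempty := ⟨v, hv⟩
  -- the "last element of W" function
  have himgne : ∀ π : Equiv.Perm (Fin n), (W.image π.symm).Nonempty :=
    fun π => hWne.image _
  set f : Equiv.Perm (Fin n) → Fin n :=
    fun π => π ((W.image π.symm).max' (himgne π)) with hf
  have hfW : ∀ π, f π ∈ W := by
    intro π
    obtain ⟨u, hu, huq⟩ := Finset.mem_image.1 ((W.image π.symm).max'_mem (himgne π))
    have : f π = u := by rw [hf]; simp [← huq]
    rwa [this]
  have hfP : ∀ π, P (f π) π := by
    intro π w hw hne
    have h1 : π.symm w ≤ π.symm (f π) := by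
      have : π.symm (f π) = (W.image π.symm).max' (himgne π) := by simp [hf]
      rw [this]
      exact Finset.le_max' _ _ (Finset.mem_image_of_mem _ hw)
    have h2 : π.symm w ≠ π.symm (f π) := fun h => hne (π.symm.injective h)
    exact lt_of_le_of_ne h1 h2
  have huniq : ∀ (π : Equiv.Perm (Fin n)) (w : Fin n), w ∈ W → P w π → f π = w := by
    intro π w hw hPw
    by_contra hne
    have h1 := hPw (f π) (hfW π) hne
    have h2 := hfP π w hw (fun h => hne h.symm)
    exact absurd h1 (not_lt.2 h2.le)
  have hsplit : Fintype.card (Equiv.Perm (Fin n)) =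
      ∑ w ∈ W, (univ.filter (fun π => P w π)).card := by
    rw [← Finset.card_univ]
    rw [Finset.card_eq_sum_card_fiberwise (f := f) (t := W) (fun π _ => hfW π)]
    refine Finset.sum_congr rfl fun w hw => ?_
    congr 1
    ext π
    simp only [Finset.mem_filter, Finset.mem_univ, true_and]
    exact ⟨fun h => h ▸ hfP π, fun h => huniq π w hw h⟩
  have hsame : ∀ w ∈ W, (univ.filter (fun π => P w π)).card
      = (univ.filter (fun π => P v π)).card := by
    intro w hw
    set σ := Equiv.swap v w with hσ
    have hσW : ∀ u ∈ W, σ u ∈ W := by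
      intro u hu
      rcases eq_or_ne u v with rfl | huv
      · simpa [hσ, Equiv.swap_apply_left] using hw
      rcases eq_or_ne u w with rfl | huw
      · simpa [hσ, Equiv.swap_apply_right] using hv
      · rwa [hσ, Equiv.swap_apply_of_ne_of_ne huv huw]
    have key : ∀ {a b : Fin n}, a ∈ W → b ∈ W → σ a = b → σ b = a →
        ∀ π, P a π → P b (π.trans σ) := by
      intro a b ha hb hab hba π hPa u hu hub
      have h1 : (π.trans σ).symm u = π.symm (σ u) := by
        simp [Equiv.symm_trans_apply, hσ, Equiv.symm_swap]
      have h2 : (π.trans σ).symm b = π.symm a := by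
        simp [Equiv.symm_trans_apply, hσ, Equiv.symm_swap]
        rw [← hσ, hba]
      rw [h1, h2]
      refine hPa (σ u) (hσW u hu) ?_
      intro h
      apply hub
      have h3 := congrArg σ h
      rw [hσ, Equiv.swap_apply_self] at h3
      rw [← hσ] at h3
      exact h3.trans hab
    have hvw : σ v = w := Equiv.swap_apply_left v w
    have hwv : σ w = v := Equiv.swap_apply_right v w
    refine Finset.card_bij' (fun π _ => π.trans σ) (fun π _ => π.trans σ) ?_ ?_ ?_ ?_
    · intro π hπ
      simp only [Finset.mem_filter, Finset.mem_univ, true_and] at hπ ⊢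
      exact key hw hv hwv hvw π hπ
    · intro π hπ
      simp only [Finset.mem_filter, Finset.mem_univ, true_and] at hπ ⊢
      exact key hv hw hvw hwv π hπ
    · intro π _
      ext x
      simp [hσ]
    · intro π _
      ext x
      simp [hσ]
  have : Fintype.card (Equiv.Perm (Fin n))
      = (univ.filter (fun π => P v π)).card * W.card := by
    rw [hsplit, Finset.sum_congr rfl hsame, Finset.sum_const, smul_eq_mul, mul_comm]
  convert this.symm using 3
  ext π
  simp [hP]

/-- number of assignments agreeing with `α` outside `T` is `2 ^ |T|`. -/
private lemma card_agree (α : Fin n → Bool) (T : Finset (Fin n)) :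
    (univ.filter (fun β : Fin n → Bool => ∀ v ∉ T, β v = α v)).card = 2 ^ T.card := by
  classical
  rw [← Finset.card_powerset]
  refine Finset.card_bij' (fun β _ => T.filter (fun v => β v = true))
    (fun S _ => fun v => if v ∈ T then decide (v ∈ S) else α v) ?_ ?_ ?_ ?_
  · intro β _
    exact Finset.mem_powerset.2 (Finset.filter_subset _ _)
  · intro S _
    simp only [Finset.mem_filter, Finset.mem_univ, true_and]
    intro v hv
    rw [if_neg hv]
  · intro β hβ
    simp only [Finset.mem_filter, Finset.mem_univ, true_and] at hβ
    funext v
    show (if v ∈ T then decide (v ∈ T.filter (fun v => β v = true)) else α v) = β v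
    by_cases hv : v ∈ T
    · rw [if_pos hv]
      simp [hv]
    · rw [if_neg hv]
      exact (hβ v hv).symm
  · intro S hS
    have hsub := Finset.mem_powerset.1 hS
    ext v
    show v ∈ T.filter (fun v => (if v ∈ T then decide (v ∈ S) else α v) = true) ↔ v ∈ S
    simp only [Finset.mem_filter]
    constructor
    · rintro ⟨hvT, hv⟩
      rw [if_pos hvT] at hv
      simpa using hv
    · intro hv
      refine ⟨hsub hv, ?_⟩
      rw [if_pos (hsub hv)]
      simpa using hv

/-- if `v` is forced for `α` and `α'` is a satisfying assignment agreeing with `α`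
on all earlier variables, then `α' v = α v`. -/
private lemma forced_determines {F : CNF (Fin n)} {π : Equiv.Perm (Fin n)}
    {α α' : Fin n → Bool} {v : Fin n}
    (hf : ForcedP F π α v) (hs' : satCNF α' F)
    (hearlier : ∀ w, π.symm w < π.symm v → α w = α' w) : α' v = α v := by
  obtain ⟨C, hC, hvC, hall⟩ := hf
  obtain ⟨l, hl, hlt⟩ := hs' C hC
  by_cases h1 : l.1 = v
  · have h2 : l.2 = α v := (hall l hl).1 h1
    rw [evalLit, h1, h2, beq_iff_eq] at hlt
    exact hlt
  · exfalso
    obtain ⟨hfalse, hlt'⟩ := (hall l hl).2 h1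
    have : α l.1 = α' l.1 := hearlier l.1 hlt'
    rw [evalLit, ← this] at hlt
    rw [evalLit] at hfalse
    rw [hfalse] at hlt
    exact Bool.false_ne_true hlt

private lemma sum_two_pow_forced_le (F : CNF (Fin n)) (π : Equiv.Perm (Fin n))
    (S : Finset (Fin n → Bool)) (hS : ∀ α ∈ S, satCNF α F) :
    ∑ α ∈ S, 2 ^ (forcedSet F π α).card ≤ 2 ^ n := by
  classical
  set Y : (Fin n → Bool) → Finset (Fin n → Bool) :=
    fun α => univ.filter (fun β => ∀ v ∉ forcedSet F π α, β v = α v) with hY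
  have hdisj : ∀ α ∈ S, ∀ α' ∈ S, α ≠ α' → Disjoint (Y α) (Y α') := by
    intro α hα α' hα' hne
    rw [Finset.disjoint_left]
    intro β h1 h2
    simp only [hY, Finset.mem_filter, Finset.mem_univ, true_and] at h1 h2
    -- first position where α and α' differ
    set D : Finset (Fin n) := univ.filter (fun v => α v ≠ α' v) with hD
    have hDne : D.Nonempty := by
      by_contra h
      apply hne
      funext v
      by_contra hv
      exact h ⟨v, by simp [hD, hv]⟩
    have himg : (D.image π.symm).Nonempty := hDne.image _
    obtain ⟨v, hvD, hvmin⟩ := Finset.mem_image.1 ((D.image π.symm).min'_mem himg)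
    have hearlier : ∀ w, π.symm w < π.symm v → α w = α' w := by
      intro w hw
      by_contra hcon
      have : π.symm w ∈ D.image π.symm :=
        Finset.mem_image_of_mem _ (by simp [hD, hcon])
      have := Finset.min'_le _ _ this
      rw [← hvmin] at this
      exact absurd hw (not_lt.2 this)
    have hvdiff : α v ≠ α' v := by
      simpa [hD] using hvD
    by_cases hf : ForcedP F π α v
    · exact hvdiff (forced_determines hf (hS α' hα') hearlier).symm
    · by_cases hf' : ForcedP F π α' v
      · exact hvdiff (forced_determines hf' (hS α hα)
          (fun w hw => (hearlier w hw).symm))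
      · have e1 : β v = α v := h1 v (fun hc => hf (mem_forcedSet.1 hc))
        have e2 : β v = α' v := h2 v (fun hc => hf' (mem_forcedSet.1 hc))
        exact hvdiff (e1 ▸ e2)
  have hcards : ∀ α ∈ S, (Y α).card = 2 ^ (forcedSet F π α).card :=
    fun α _ => card_agree α _
  calc ∑ α ∈ S, 2 ^ (forcedSet F π α).card
      = ∑ α ∈ S, (Y α).card := by
        exact (Finset.sum_congr rfl hcards).symm
    _ = (S.biUnion Y).card := (Finset.card_biUnion hdisj).symm
    _ ≤ Fintype.card (Fin n → Bool) := Finset.card_le_univ _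
    _ = 2 ^ n := by simp

private lemma sum_forced_ge {F : CNF (Fin n)} {k : ℕ} (hF : kCNF k F)
    {α : Fin n → Bool} (hsat : satCNF α F)
    (hiso : ∀ v, ¬ satCNF (Function.update α v (!(α v))) F) :
    n * Fintype.card (Equiv.Perm (Fin n))
      ≤ k * ∑ π : Equiv.Perm (Fin n), (forcedSet F π α).card := by
  classical
  have hswap : ∑ π : Equiv.Perm (Fin n), (forcedSet F π α).card
      = ∑ v : Fin n, (univ.filter (fun π : Equiv.Perm (Fin n) => ForcedP F π α v)).card := by
    simp only [forcedSet, Finset.filter_congr_decidable, Finset.card_filter]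
    exact Finset.sum_comm
  rw [hswap, Finset.mul_sum]
  have hterm : ∀ v : Fin n, Fintype.card (Equiv.Perm (Fin n))
      ≤ k * (univ.filter (fun π : Equiv.Perm (Fin n) => ForcedP F π α v)).card := by
    intro v
    obtain ⟨C, hC, hvC, hcrit⟩ := critical hsat (hiso v)
    have hvW : v ∈ varsOf C := by
      simp only [varsOf, List.mem_toFinset, List.mem_map]
      exact ⟨(v, α v), hvC, rfl⟩
    have hWk : (varsOf C).card ≤ k := by
      calc (varsOf C).card ≤ (C.map Prod.fst).length := List.toFinset_card_le _
        _ = C.length := List.length_map _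
        _ ≤ k := hF C hC
    have hcount := count_last_mul (varsOf C) hvW
    have hsub : (@Finset.filter _ (fun π : Equiv.Perm (Fin n) =>
          ∀ w ∈ varsOf C, w ≠ v → π.symm w < π.symm v) (Classical.decPred _) univ)
        ⊆ univ.filter (fun π : Equiv.Perm (Fin n) => ForcedP F π α v) := by
      intro π hπ
      simp only [Finset.mem_filter, Finset.mem_univ, true_and] at hπ ⊢
      exact last_forced hC hvC hcrit hπ
    calc Fintype.card (Equiv.Perm (Fin n))
        = (@Finset.filter _ (fun π : Equiv.Perm (Fin n) =>
            ∀ w ∈ varsOf C, w ≠ v → π.symm w < π.symm v) (Classical.decPred _) univ).card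
            * (varsOf C).card := hcount.symm
      _ ≤ (univ.filter (fun π : Equiv.Perm (Fin n) => ForcedP F π α v)).card * k :=
          Nat.mul_le_mul (Finset.card_le_card hsub) hWk
      _ = k * (univ.filter (fun π : Equiv.Perm (Fin n) => ForcedP F π α v)).card :=
          mul_comm _ _
  calc n * Fintype.card (Equiv.Perm (Fin n))
      = ∑ _v : Fin n, Fintype.card (Equiv.Perm (Fin n)) := by
        rw [Finset.sum_const, Finset.card_univ, Fintype.card_fin, smul_eq_mul]
    _ ≤ ∑ v : Fin n, k * (univ.filter (fun π : Equiv.Perm (Fin n) => ForcedP F π α v)).card :=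
        Finset.sum_le_sum (fun v _ => hterm v)

/-- elementary Jensen via `1 + x ≤ exp x`. -/
private lemma card_mul_exp_le {ι : Type*} [Fintype ι] (x : ι → ℝ) (a : ℝ)
    (ha : (Fintype.card ι : ℝ) * a ≤ ∑ i : ι, x i) :
    (Fintype.card ι : ℝ) * Real.exp a ≤ ∑ i : ι, Real.exp (x i) := by
  have h1 : (Fintype.card ι : ℝ) ≤ ∑ i : ι, (1 + (x i - a)) := by
    have heq : ∑ i : ι, (1 + (x i - a))
        = (Fintype.card ι : ℝ) + ((∑ i : ι, x i) - (Fintype.card ι : ℝ) * a) := by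
      rw [Finset.sum_add_distrib, Finset.sum_sub_distrib, Finset.sum_const, Finset.sum_const,
        Finset.card_univ, nsmul_eq_mul, nsmul_eq_mul, mul_one]
    rw [heq]
    linarith
  calc (Fintype.card ι : ℝ) * Real.exp a
      ≤ (∑ i : ι, (1 + (x i - a))) * Real.exp a :=
        mul_le_mul_of_nonneg_right h1 (Real.exp_nonneg a)
    _ = ∑ i : ι, (1 + (x i - a)) * Real.exp a := Finset.sum_mul ..
    _ ≤ ∑ i : ι, Real.exp (x i) := by
        refine Finset.sum_le_sum fun i _ => ?_
        have h2 : (1 + (x i - a)) ≤ Real.exp (x i - a) := by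
          have := Real.add_one_le_exp (x i - a)
          linarith
        calc (1 + (x i - a)) * Real.exp a ≤ Real.exp (x i - a) * Real.exp a :=
              mul_le_mul_of_nonneg_right h2 (Real.exp_nonneg a)
          _ = Real.exp (x i) := by rw [← Real.exp_add]; ring_nf

end IsolatedAux

theorem isolated_solutions_bound {n k : ℕ} (hk : 1 ≤ k) (F : CNF (Fin n)) (hF : kCNF k F) :
    ({α : Fin n → Bool | satCNF α F ∧
        ∀ v, ¬ satCNF (Function.update α v (!(α v))) F}.ncard : ℝ)
      ≤ (2 : ℝ) ^ ((1 - 1 / (k : ℝ)) * (n : ℝ)) := by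
  classical
  have hfin : ({α : Fin n → Bool | satCNF α F ∧
      ∀ v, ¬ satCNF (Function.update α v (!(α v))) F}).Finite := Set.toFinite _
  rw [Set.ncard_eq_toFinset_card _ hfin]
  set Sf : Finset (Fin n → Bool) := hfin.toFinset with hSf
  have hmem : ∀ α ∈ Sf, satCNF α F ∧ ∀ v, ¬ satCNF (Function.update α v (!(α v))) F := by
    intro α hα
    rwa [hSf, Set.Finite.mem_toFinset] at hα
  have hk0 : (0:ℝ) < k := by exact_mod_cast hk
  set N : ℕ := Fintype.card (Equiv.Perm (Fin n)) with hN
  have hN0 : (0:ℝ) < N := by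
    have : 0 < N := Fintype.card_pos
    exact_mod_cast this
  have hlog2 : (0:ℝ) < Real.log 2 := Real.log_pos (by norm_num)
  set E : ℝ := Real.exp (((n:ℝ)/(k:ℝ)) * Real.log 2) with hE
  have hexp : ∀ m : ℕ, Real.exp ((m:ℝ) * Real.log 2) = (2:ℝ) ^ m := by
    intro m
    rw [← Real.log_pow, Real.exp_log (by positivity)]
  -- lower bound on the permutation sum, for each isolated solution
  have key : ∀ α ∈ Sf, (N : ℝ) * E
      ≤ ∑ π : Equiv.Perm (Fin n), ((2:ℝ) ^ (forcedSet F π α).card) := by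
    intro α hα
    obtain ⟨hsat, hiso⟩ := hmem α hα
    have hnat := sum_forced_ge hF hsat hiso
    have hcast : (n:ℝ) * (N:ℝ)
        ≤ (k:ℝ) * ∑ π : Equiv.Perm (Fin n), ((forcedSet F π α).card : ℝ) := by
      push_cast
      exact_mod_cast hnat
    have hsum : (N:ℝ) * (((n:ℝ)/(k:ℝ)) * Real.log 2)
        ≤ ∑ π : Equiv.Perm (Fin n), (((forcedSet F π α).card : ℝ) * Real.log 2) := by
      rw [← Finset.sum_mul]
      have h2 : (N:ℝ) * ((n:ℝ)/(k:ℝ))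
          ≤ ∑ π : Equiv.Perm (Fin n), ((forcedSet F π α).card : ℝ) := by
        rw [show (N:ℝ) * ((n:ℝ)/(k:ℝ)) = ((n:ℝ) * (N:ℝ))/(k:ℝ) by ring,
          div_le_iff₀ hk0]
        nlinarith [hcast]
      nlinarith [h2, hlog2]
    have hjen := card_mul_exp_le
      (fun π : Equiv.Perm (Fin n) => ((forcedSet F π α).card : ℝ) * Real.log 2)
      (((n:ℝ)/(k:ℝ)) * Real.log 2) hsum
    rw [hE]
    refine le_trans hjen (le_of_eq ?_)
    exact Finset.sum_congr rfl (fun π _ => hexp _)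
  -- upper bound on the permutation sum
  have upper : ∀ π : Equiv.Perm (Fin n),
      ∑ α ∈ Sf, ((2:ℝ) ^ (forcedSet F π α).card) ≤ (2:ℝ) ^ n := by
    intro π
    have := sum_two_pow_forced_le F π Sf (fun α hα => (hmem α hα).1)
    exact_mod_cast this
  have hmain : (Sf.card : ℝ) * ((N:ℝ) * E) ≤ (N:ℝ) * (2:ℝ) ^ n := by
    calc (Sf.card : ℝ) * ((N:ℝ) * E) = ∑ _α ∈ Sf, ((N:ℝ) * E) := by
          rw [Finset.sum_const, nsmul_eq_mul]
      _ ≤ ∑ α ∈ Sf, ∑ π : Equiv.Perm (Fin n), ((2:ℝ) ^ (forcedSet F π α).card) :=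
          Finset.sum_le_sum key
      _ = ∑ π : Equiv.Perm (Fin n), ∑ α ∈ Sf, ((2:ℝ) ^ (forcedSet F π α).card) :=
          Finset.sum_comm
      _ ≤ ∑ _π : Equiv.Perm (Fin n), (2:ℝ) ^ n :=
          Finset.sum_le_sum (fun π _ => upper π)
      _ = (N:ℝ) * (2:ℝ) ^ n := by
          rw [Finset.sum_const, Finset.card_univ, nsmul_eq_mul]
  have hcard : (Sf.card : ℝ) * E ≤ (2:ℝ) ^ n := by
    have h3 : (N:ℝ) * ((Sf.card : ℝ) * E) ≤ (N:ℝ) * ((2:ℝ) ^ n) := by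
      nlinarith [hmain]
    exact le_of_mul_le_mul_left h3 hN0
  have hEval : E = (2:ℝ) ^ ((n:ℝ)/(k:ℝ)) := by
    rw [hE, Real.rpow_def_of_pos (by norm_num), mul_comm]
  have hE0 : (0:ℝ) < E := Real.exp_pos _
  rw [show ((1:ℝ) - 1/(k:ℝ)) * (n:ℝ) = (n:ℝ) - (n:ℝ)/(k:ℝ) by ring,
    Real.rpow_sub (by norm_num), Real.rpow_natCast, ← hEval, le_div_iff₀ hE0]
  exact hcard
end

section
/- Any simple undirected graph on n vertices has at most 3^{n/3} maximal independent sets. -/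
variable {V : Type*}

section MoonMoserAux
open scoped Classical

lemma mm_cube_le_three_pow : ∀ k : ℕ, k ^ 3 ≤ 3 ^ k := by
  intro k
  induction k with
  | zero => norm_num
  | succ n ih =>
    match n, ih with
    | 0, _ => norm_num
    | 1, _ => norm_num
    | 2, _ => norm_num
    | (m+3), ih =>
      have e1 : (m+3+1)^3 = m^3+12*m^2+48*m+64 := by ring
      have e2 : 3*(m+3)^3 = 3*m^3+27*m^2+81*m+81 := by ring
      calc (m+3+1)^3 ≤ 3 * (m+3)^3 := by omega
        _ ≤ 3 * 3^(m+3) := by omega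
        _ = 3^(m+3+1) := by rw [pow_succ]; ring

lemma mm_nat_le_rpow (k : ℕ) : (k : ℝ) ≤ (3:ℝ) ^ ((k:ℝ)/3) := by
  have hb : (0:ℝ) ≤ (3:ℝ) ^ ((k:ℝ)/3) := Real.rpow_nonneg (by norm_num) _
  have h1 : ((k:ℝ))^3 ≤ ((3:ℝ)^((k:ℝ)/3))^3 := by
    rw [← Real.rpow_natCast ((3:ℝ)^((k:ℝ)/3)) 3, ← Real.rpow_mul (by norm_num)]
    have : (k:ℝ)/3 * ((3:ℕ):ℝ) = (k:ℕ) := by push_cast; ring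
    rw [this, Real.rpow_natCast]
    exact_mod_cast mm_cube_le_three_pow k
  exact le_of_pow_le_pow_left₀ (by norm_num) hb h1

variable {W : Type*} [Fintype W] [DecidableEq W]

def mmIndep (G : SimpleGraph W) (S : Finset W) : Prop := ∀ a ∈ S, ∀ b ∈ S, ¬ G.Adj a b

def mmMIS (G : SimpleGraph W) (A S : Finset W) : Prop :=
  S ⊆ A ∧ mmIndep G S ∧ ∀ x ∈ A, x ∉ S → ∃ y ∈ S, G.Adj x y

noncomputable def mmCount (G : SimpleGraph W) (A : Finset W) : ℕ :=
  (Finset.univ.filter (fun S => mmMIS G A S)).card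

lemma mmCount_le (G : SimpleGraph W) :
    ∀ n (A : Finset W), A.card = n → (mmCount G A : ℝ) ≤ (3:ℝ) ^ ((n:ℝ)/3) := by
  intro n
  induction n using Nat.strong_induction_on with
  | _ n ih =>
    intro A hA
    rcases Finset.eq_empty_or_nonempty A with rfl | hne
    · -- only S = ∅
      have : mmCount G ∅ ≤ 1 := by
        rw [mmCount]
        apply Finset.card_le_one.mpr
        intro S hS T hT
        simp only [Finset.mem_filter] at hS hT
        have h1 : S = ∅ := Finset.subset_empty.mp hS.2.1
        have h2 : T = ∅ := Finset.subset_empty.mp hT.2.1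
        rw [h1, h2]
      calc (mmCount G ∅ : ℝ) ≤ 1 := by exact_mod_cast this
        _ ≤ _ := by
          have h0 : n = 0 := by simpa using hA.symm
          subst h0
          rw [show ((0:ℕ):ℝ)/3 = 0 by norm_num, Real.rpow_zero]
    · -- choose min degree vertex
      -- degree within A
      set deg : W → ℕ := fun u => (A.filter (G.Adj u)).card with hdeg
      obtain ⟨v, hvA, hvmin⟩ := Finset.exists_min_image A deg hne
      set d := deg v with hd
      set Nv : W → Finset W := fun u => A.filter (G.Adj u) with hNv
      have hsub : Finset.univ.filter (fun S => mmMIS G A S) ⊆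
          (insert v (Nv v)).biUnion
            (fun u => Finset.univ.filter (fun S => mmMIS G A S ∧ u ∈ S)) := by
        intro S hS
        simp only [Finset.mem_filter, Finset.mem_univ, true_and] at hS
        rw [Finset.mem_biUnion]
        by_cases hv : v ∈ S
        · exact ⟨v, Finset.mem_insert_self _ _, by simp [hS, hv]⟩
        · obtain ⟨y, hyS, hyadj⟩ := hS.2.2 v hvA hv
          refine ⟨y, Finset.mem_insert_of_mem ?_, by simp [hS, hyS]⟩
          exact Finset.mem_filter.mpr ⟨hS.1 hyS, hyadj⟩
      have hcard1 : mmCount G A ≤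
          ∑ u ∈ insert v (Nv v),
            (Finset.univ.filter (fun S => mmMIS G A S ∧ u ∈ S)).card :=
        le_trans (Finset.card_le_card hsub) (Finset.card_biUnion_le)
      -- per-u injection
      have hper : ∀ u ∈ insert v (Nv v),
          ((Finset.univ.filter (fun S => mmMIS G A S ∧ u ∈ S)).card : ℝ)
            ≤ (3:ℝ) ^ (((n:ℝ) - 1 - d)/3) := by
        intro u hu
        have huA : u ∈ A := by
          rcases Finset.mem_insert.mp hu with rfl | h
          · exact hvA
          · exact (Finset.mem_filter.mp h).1
        set A' : Finset W := A \ insert u (Nv u) with hA'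
        -- injection S ↦ S.erase u
        have hinj : (Finset.univ.filter (fun S => mmMIS G A S ∧ u ∈ S)).card ≤
            (Finset.univ.filter (fun S => mmMIS G A' S)).card := by
          apply Finset.card_le_card_of_injOn (fun S => S.erase u)
          · intro S hS
            simp only [Finset.mem_coe, Finset.mem_filter, Finset.mem_univ, true_and] at hS ⊢
            obtain ⟨⟨hSA, hSind, hSmax⟩, huS⟩ := hS
            refine ⟨?_, ?_, ?_⟩
            · intro x hx
              have hxS := Finset.mem_of_mem_erase hx
              have hxu := Finset.ne_of_mem_erase hx
              rw [hA', Finset.mem_sdiff]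
              refine ⟨hSA hxS, ?_⟩
              intro hmem
              rcases Finset.mem_insert.mp hmem with rfl | hmem'
              · exact hxu rfl
              · exact hSind u huS x hxS (Finset.mem_filter.mp hmem').2
            · intro a ha b hb
              exact hSind a (Finset.mem_of_mem_erase ha) b (Finset.mem_of_mem_erase hb)
            · intro x hx hxnot
              rw [hA', Finset.mem_sdiff] at hx
              have hxu : x ≠ u := by
                intro h; exact hx.2 (h ▸ Finset.mem_insert_self _ _)
              have hxS : x ∉ S := fun h => hxnot (Finset.mem_erase.mpr ⟨hxu, h⟩)
              obtain ⟨y, hyS, hyadj⟩ := hSmax x hx.1 hxS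
              refine ⟨y, Finset.mem_erase.mpr ⟨?_, hyS⟩, hyadj⟩
              intro hyu
              rw [hyu] at hyadj
              exact hx.2 (Finset.mem_insert_of_mem
                (Finset.mem_filter.mpr ⟨hx.1, hyadj.symm⟩))
          · intro S hS T hT hST
            simp only [Finset.coe_filter, Set.mem_setOf_eq, Finset.mem_univ,
              true_and] at hS hT
            have : insert u (S.erase u) = insert u (T.erase u) := by
              rw [show S.erase u = T.erase u from hST]
            rwa [Finset.insert_erase hS.2, Finset.insert_erase hT.2] at this
        -- card bound on A'
        have hclsub : insert u (Nv u) ⊆ A := by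
          intro x hx
          rcases Finset.mem_insert.mp hx with rfl | h
          · exact huA
          · exact (Finset.mem_filter.mp h).1
        have hunotN : u ∉ Nv u := by
          simp [hNv, G.irrefl]
        have hA'card : A'.card + (1 + deg u) = n := by
          have hde : (Nv u).card = deg u := rfl
          have h1 : (insert u (Nv u)).card ≤ A.card := Finset.card_le_card hclsub
          rw [Finset.card_insert_of_notMem hunotN, hde] at h1
          rw [hA', Finset.card_sdiff_of_subset hclsub, Finset.card_insert_of_notMem hunotN, hde]
          omega
        have hdle : d ≤ deg u := hvmin u huA
        have hlt : A'.card < n := by omega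
        have hIH := ih A'.card hlt A' rfl
        have hcast : (A'.card : ℝ) ≤ (n:ℝ) - 1 - d := by
          have : (A'.card : ℝ) + (1 + (deg u : ℝ)) = n := by exact_mod_cast hA'card
          have : (A'.card : ℝ) = (n:ℝ) - 1 - deg u := by linarith
          rw [this]
          have : (d:ℝ) ≤ deg u := by exact_mod_cast hdle
          linarith
        calc ((Finset.univ.filter (fun S => mmMIS G A S ∧ u ∈ S)).card : ℝ)
            ≤ ((Finset.univ.filter (fun S => mmMIS G A' S)).card : ℝ) := by
              exact_mod_cast hinj
          _ ≤ (3:ℝ) ^ ((A'.card : ℝ)/3) := hIH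
          _ ≤ (3:ℝ) ^ (((n:ℝ) - 1 - d)/3) := by
              apply Real.rpow_le_rpow_of_exponent_le (by norm_num)
              linarith
      -- combine
      have hcardins : (insert v (Nv v)).card = d + 1 := by
        have hvnot : v ∉ Nv v := by simp [hNv, G.irrefl]
        rw [Finset.card_insert_of_notMem hvnot]
      calc (mmCount G A : ℝ)
          ≤ ∑ u ∈ insert v (Nv v),
              ((Finset.univ.filter (fun S => mmMIS G A S ∧ u ∈ S)).card : ℝ) := by
            exact_mod_cast hcard1
        _ ≤ ∑ _u ∈ insert v (Nv v), (3:ℝ) ^ (((n:ℝ) - 1 - d)/3) :=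
            Finset.sum_le_sum hper
        _ = ((d:ℝ) + 1) * (3:ℝ) ^ (((n:ℝ) - 1 - d)/3) := by
            rw [Finset.sum_const, hcardins]; push_cast; ring
        _ ≤ (3:ℝ) ^ (((d:ℝ)+1)/3) * (3:ℝ) ^ (((n:ℝ) - 1 - d)/3) := by
            apply mul_le_mul_of_nonneg_right _ (Real.rpow_nonneg (by norm_num) _)
            have := mm_nat_le_rpow (d+1)
            push_cast at this
            convert this using 2
        _ = (3:ℝ) ^ ((n:ℝ)/3) := by
            rw [← Real.rpow_add (by norm_num)]
            ring_nf

end MoonMoserAux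

theorem moon_moser {W : Type*} [Fintype W] (G : SimpleGraph W) :
    ({S : Set W | (∀ a ∈ S, ∀ b ∈ S, ¬ G.Adj a b) ∧
        ∀ T : Set W, S ⊆ T → (∀ a ∈ T, ∀ b ∈ T, ¬ G.Adj a b) → T = S}.ncard : ℝ)
      ≤ (3 : ℝ) ^ ((Fintype.card W : ℝ) / 3) := by
  classical
  set 𝒮 : Set (Set W) := {S : Set W | (∀ a ∈ S, ∀ b ∈ S, ¬ G.Adj a b) ∧
        ∀ T : Set W, S ⊆ T → (∀ a ∈ T, ∀ b ∈ T, ¬ G.Adj a b) → T = S} with h𝒮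
  have hfin : 𝒮.Finite := Set.toFinite _
  have key : 𝒮.ncard ≤ mmCount G (Finset.univ : Finset W) := by
    rw [Set.ncard_eq_toFinset_card' 𝒮, mmCount]
    apply Finset.card_le_card_of_injOn (fun S => (Set.toFinite S).toFinset)
    · intro S hS
      rw [Finset.mem_coe, Set.mem_toFinset] at hS
      obtain ⟨hind, hmax⟩ := hS
      simp only [Finset.mem_coe, Finset.mem_filter, Finset.mem_univ, true_and]
      refine ⟨Finset.subset_univ _, ?_, ?_⟩
      · intro a ha b hb
        rw [Set.Finite.mem_toFinset] at ha hb
        exact hind a ha b hb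
      · intro x _ hx
        rw [Set.Finite.mem_toFinset] at hx
        by_contra hno
        push_neg at hno
        have hTind : ∀ a ∈ insert x S, ∀ b ∈ insert x S, ¬ G.Adj a b := by
          intro a ha b hb
          rcases Set.mem_insert_iff.mp ha with rfl | haS
          · rcases Set.mem_insert_iff.mp hb with rfl | hbS
            · exact G.irrefl
            · intro h
              exact hno b (by simpa [Set.Finite.mem_toFinset] using hbS) h
          · rcases Set.mem_insert_iff.mp hb with rfl | hbS
            · intro h
              exact hno a (by simpa [Set.Finite.mem_toFinset] using haS) h.symm
            · exact hind a haS b hbS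
        have := hmax (insert x S) (Set.subset_insert x S) hTind
        exact hx (this ▸ Set.mem_insert x S)
    · intro S hS T hT hST
      have : ((Set.toFinite S).toFinset : Set W) = ((Set.toFinite T).toFinset : Set W) := by
        rw [show (Set.toFinite S).toFinset = (Set.toFinite T).toFinset from hST]
      simpa [Set.Finite.coe_toFinset] using this
  calc (𝒮.ncard : ℝ) ≤ (mmCount G (Finset.univ : Finset W) : ℝ) := by exact_mod_cast key
    _ ≤ (3 : ℝ) ^ ((Fintype.card W : ℝ) / 3) :=
        mmCount_le G (Fintype.card W) Finset.univ (Finset.card_univ)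
end

section
/- The 2-CNF formula T(x,y,z) = ⋀_{i=1}^m (x_i ∨ y_i) ∧ (y_i ∨ z_i) ∧ (x_i ∨ z_i) on n = 3m variables has exactly 3^{n/3} prime implicants. -/
variable {V : Type*}

section Aux

variable {m : ℕ}

lemma mem_Tfml (c : Clause2 (Fin m × Fin 3)) :
    c ∈ Tfml m ↔ ∃ i : Fin m,
      c = (((i, 0), true), ((i, 1), true)) ∨
      c = (((i, 1), true), ((i, 2), true)) ∨
      c = (((i, 0), true), ((i, 2), true)) := by
  simp [Tfml, List.mem_flatMap, List.mem_finRange, eq_comm]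

lemma implicant_Tfml_iff (ρ : Fin m × Fin 3 → Option Bool) :
    implicant2 ρ (Tfml m) ↔
      ∀ i : Fin m, ∃ j : Fin 3, ∀ k, k ≠ j → ρ (i, k) = some true := by
  constructor
  · intro hImp i
    by_contra hno
    push_neg at hno
    set α : Fin m × Fin 3 → Bool := fun v => decide (ρ v = some true) with hα
    have hext : extendsR α ρ := by
      intro v b hb
      cases b <;> simp [hα, hb]
    have hsat := hImp α hext
    have hval : ∀ k : Fin 3, ρ (i, k) ≠ some true → α (i, k) = false := by
      intro k hk; simp [hα, hk]
    -- find two indices where ρ is not `some true`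
    by_cases h0 : ρ (i, 0) = some true <;>
    by_cases h1 : ρ (i, 1) = some true <;>
    by_cases h2 : ρ (i, 2) = some true
    · obtain ⟨k, hk, hkt⟩ := hno 0
      fin_cases k <;> simp_all
    · obtain ⟨k, hk, hkt⟩ := hno 2
      fin_cases k <;> simp_all
    · obtain ⟨k, hk, hkt⟩ := hno 1
      fin_cases k <;> simp_all
    · -- ρ (i,1) and ρ (i,2) not some true : clause ((i,1),(i,2)) fails
      have hc : (((i, 1), true), ((i, 2), true)) ∈ Tfml m :=
        (mem_Tfml _).2 ⟨i, Or.inr (Or.inl rfl)⟩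
      have := hsat _ hc
      simp [evalLit, hval 1 h1, hval 2 h2] at this
    · obtain ⟨k, hk, hkt⟩ := hno 0
      fin_cases k <;> simp_all
    · have hc : (((i, 0), true), ((i, 2), true)) ∈ Tfml m :=
        (mem_Tfml _).2 ⟨i, Or.inr (Or.inr rfl)⟩
      have := hsat _ hc
      simp [evalLit, hval 0 h0, hval 2 h2] at this
    · have hc : (((i, 0), true), ((i, 1), true)) ∈ Tfml m :=
        (mem_Tfml _).2 ⟨i, Or.inl rfl⟩
      have := hsat _ hc
      simp [evalLit, hval 0 h0, hval 1 h1] at this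
    · have hc : (((i, 0), true), ((i, 1), true)) ∈ Tfml m :=
        (mem_Tfml _).2 ⟨i, Or.inl rfl⟩
      have := hsat _ hc
      simp [evalLit, hval 0 h0, hval 1 h1] at this
  · intro h α hext c hc
    obtain ⟨i, hi⟩ := (mem_Tfml c).1 hc
    obtain ⟨j, hj⟩ := h i
    have hαt : ∀ k : Fin 3, k ≠ j → α (i, k) = true := by
      intro k hk; exact hext _ _ (hj k hk)
    rcases hi with h' | h' | h' <;> subst h'
    · by_cases hj0 : j = 0
      · subst hj0; exact Or.inr (by simp [evalLit, hαt 1 (by decide)])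
      · exact Or.inl (by simp [evalLit, hαt 0 (fun h' => hj0 h'.symm)])
    · by_cases hj1 : j = 1
      · subst hj1; exact Or.inr (by simp [evalLit, hαt 2 (by decide)])
      · exact Or.inl (by simp [evalLit, hαt 1 (fun h' => hj1 h'.symm)])
    · by_cases hj0 : j = 0
      · subst hj0; exact Or.inr (by simp [evalLit, hαt 2 (by decide)])
      · exact Or.inl (by simp [evalLit, hαt 0 (fun h' => hj0 h'.symm)])

lemma prime_Tfml_iff (ρ : Fin m × Fin 3 → Option Bool) :
    primeImplicant2 ρ (Tfml m) ↔
      ∀ i : Fin m, ∃ j : Fin 3, ρ (i, j) = none ∧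
        ∀ k, k ≠ j → ρ (i, k) = some true := by
  constructor
  · rintro ⟨hImp, hMin⟩ i
    obtain ⟨j, hj⟩ := (implicant_Tfml_iff ρ).1 hImp i
    refine ⟨j, ?_, hj⟩
    by_contra hne
    refine hMin (i, j) hne ?_
    rw [implicant_Tfml_iff] at hImp ⊢
    intro i'
    by_cases hii : i' = i
    · refine ⟨j, fun k hk => ?_⟩
      have hne : ((i', k) : Fin m × Fin 3) ≠ (i, j) := by
        intro h'
        exact hk (by simpa using congrArg Prod.snd h')
      rw [unfix, Function.update_of_ne hne, hii]
      exact hj k hk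
    · obtain ⟨j', hj'⟩ := hImp i'
      refine ⟨j', fun k hk => ?_⟩
      have hne : ((i', k) : Fin m × Fin 3) ≠ (i, j) := by
        intro h'
        exact hii (by simpa using congrArg Prod.fst h')
      rw [unfix, Function.update_of_ne hne]
      exact hj' k hk
  · intro h
    have hImp : implicant2 ρ (Tfml m) := by
      rw [implicant_Tfml_iff]
      intro i; obtain ⟨j, _, hj⟩ := h i; exact ⟨j, hj⟩
    refine ⟨hImp, ?_⟩
    rintro ⟨i, v2⟩ hv hImp'
    obtain ⟨j, hjn, hjt⟩ := h i
    have hv2j : v2 ≠ j := by rintro rfl; exact hv hjn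
    rw [implicant_Tfml_iff] at hImp'
    obtain ⟨j', hj'⟩ := hImp' i
    by_cases hc : j' = v2
    · have hne' : j ≠ j' := by rw [hc]; exact Ne.symm hv2j
      have h1 := hj' j hne'
      have hne : ((i, j) : Fin m × Fin 3) ≠ (i, v2) := by
        intro h'
        apply hv2j
        exact (congrArg Prod.snd h').symm
      rw [unfix, Function.update_of_ne hne, hjn] at h1
      exact Option.noConfusion rfl (heq_of_eq h1)
    · have h1 := hj' v2 (fun h' => hc h'.symm)
      rw [unfix, Function.update_self] at h1
      exact Option.noConfusion rfl (heq_of_eq h1)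

def toRho (c : Fin m → Fin 3) : Fin m × Fin 3 → Option Bool :=
  fun p => if p.2 = c p.1 then none else some true

lemma toRho_injective : Function.Injective (toRho (m := m)) := by
  intro c c' h
  funext i
  have h2 := congrFun h (i, c i)
  by_contra hne
  simp [toRho, hne] at h2

end Aux

theorem Tfml_prime_implicant_count (m : ℕ) :
    {ρ : Fin m × Fin 3 → Option Bool | primeImplicant2 ρ (Tfml m)}.ncard = 3 ^ m := by
  have hset : {ρ : Fin m × Fin 3 → Option Bool | primeImplicant2 ρ (Tfml m)}
      = Set.range (toRho (m := m)) := by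
    ext ρ
    rw [Set.mem_setOf_eq, prime_Tfml_iff]
    constructor
    · intro h
      choose c hc1 hc2 using h
      refine ⟨c, ?_⟩
      funext p
      obtain ⟨i, k⟩ := p
      by_cases hk : k = c i
      · subst hk; simp [toRho, hc1 i]
      · simp [toRho, hk, hc2 i k hk]
    · rintro ⟨c, rfl⟩ i
      exact ⟨c i, by simp [toRho], fun k hk => by simp [toRho, hk]⟩
  rw [hset, ← Nat.card_coe_set_eq, Nat.card_range_of_injective toRho_injective]
  simp [Nat.card_eq_fintype_card]
end

section
/- Every prime implicant of the formula T(x,y,z) = ⋀_{i=1}^m (x_i ∨ y_i) ∧ (y_i ∨ z_i) ∧ (x_i ∨ z_i) sets, for each i, exactly two of the three variables x_i, y_i, z_i to 1 and leaves the third free. -/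
variable {V : Type*}

lemma mem_Tfml_iff {m : ℕ} (c : Clause2 (Fin m × Fin 3)) :
    c ∈ Tfml m ↔ ∃ i : Fin m,
      c = (((i, 0), true), ((i, 1), true)) ∨
      c = (((i, 1), true), ((i, 2), true)) ∨
      c = (((i, 0), true), ((i, 2), true)) := by
  simp [Tfml, List.mem_flatMap, List.mem_finRange]

lemma pair_true {m : ℕ} (ρ : Fin m × Fin 3 → Option Bool)
    (himp : implicant2 ρ (Tfml m)) (i : Fin m) (j j' : Fin 3)
    (hc : ((((i, j), true), ((i, j'), true)) : Clause2 (Fin m × Fin 3)) ∈ Tfml m) :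
    ρ (i, j) = some true ∨ ρ (i, j') = some true := by
  by_contra hne
  push_neg at hne
  obtain ⟨h1, h2⟩ := hne
  set α : Fin m × Fin 3 → Bool := fun w =>
    if w = (i, j) ∨ w = (i, j') then false else (ρ w).getD true with hα
  have hext : extendsR α ρ := by
    intro v b hv
    by_cases hvj : v = (i, j) ∨ v = (i, j')
    · rcases hvj with rfl | rfl
      · cases b
        · simp [α]
        · exact absurd hv h1
      · cases b
        · simp [α]
        · exact absurd hv h2
    · push_neg at hvj
      simp [α, hvj.1, hvj.2, hv]
  have hs := himp α hext _ hc
  simp [evalLit, α] at hs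

lemma unfix_implicant {m : ℕ} (ρ : Fin m × Fin 3 → Option Bool)
    (himp : implicant2 ρ (Tfml m)) (i : Fin m) (j : Fin 3)
    (hoth : ∀ j', j' ≠ j → ρ (i, j') = some true) :
    implicant2 (unfix ρ (i, j)) (Tfml m) := by
  intro α hext c hc
  have hαρ : ∀ v b, v ≠ (i, j) → ρ v = some b → α v = b := by
    intro v b hv hvb
    exact hext v b (by simpa [unfix, Function.update, hv] using hvb)
  have key : ∀ k : Fin 3, k ≠ j → evalLit α (((i, k), true) : Lit (Fin m × Fin 3)) = true := by
    intro k hk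
    have := hαρ (i, k) true (by simp [hk]) (hoth k hk)
    simp [evalLit, this]
  have tri : ∀ a b : Fin 3, a ≠ b → a ≠ j ∨ b ≠ j := by
    intro a b hab
    by_contra hcon
    push_neg at hcon
    exact hab (hcon.1.trans hcon.2.symm)
  rcases (mem_Tfml_iff c).1 hc with ⟨i', hcl⟩
  by_cases hii : i' = i
  · subst hii
    rcases hcl with rfl | rfl | rfl
    · rcases tri 0 1 (by decide) with hk | hk
      · exact Or.inl (key 0 hk)
      · exact Or.inr (key 1 hk)
    · rcases tri 1 2 (by decide) with hk | hk
      · exact Or.inl (key 1 hk)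
      · exact Or.inr (key 2 hk)
    · rcases tri 0 2 (by decide) with hk | hk
      · exact Or.inl (key 0 hk)
      · exact Or.inr (key 2 hk)
  · -- clause in another block
    set α' : Fin m × Fin 3 → Bool :=
      Function.update α (i, j) ((ρ (i, j)).getD true) with hα'
    have hext' : extendsR α' ρ := by
      intro v b hv
      by_cases hvj : v = (i, j)
      · subst hvj
        simp [α', hv]
      · simp [α', Function.update, hvj]
        exact hαρ v b hvj hv
    have hs := himp α' hext' _ hc
    have hne1 : c.1.1 ≠ (i, j) := by
      rcases hcl with rfl | rfl | rfl <;> simp [Prod.ext_iff, hii]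
    have hne2 : c.2.1 ≠ (i, j) := by
      rcases hcl with rfl | rfl | rfl <;> simp [Prod.ext_iff, hii]
    have e1 : evalLit α' c.1 = evalLit α c.1 := by
      simp [evalLit, α', Function.update, hne1]
    have e2 : evalLit α' c.2 = evalLit α c.2 := by
      simp [evalLit, α', Function.update, hne2]
    rwa [e1, e2] at hs

theorem Tfml_prime_implicant_structure (m : ℕ) (ρ : Fin m × Fin 3 → Option Bool)
    (h : primeImplicant2 ρ (Tfml m)) :
    ∀ i : Fin m, ∃ j : Fin 3, ρ (i, j) = none ∧ ∀ j' : Fin 3, j' ≠ j → ρ (i, j') = some true := by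
  obtain ⟨himp, hprime⟩ := h
  intro i
  have mem1 : ((((i, (0:Fin 3)), true), ((i, 1), true)) : Clause2 (Fin m × Fin 3)) ∈ Tfml m :=
    (mem_Tfml_iff _).2 ⟨i, Or.inl rfl⟩
  have mem2 : ((((i, (1:Fin 3)), true), ((i, 2), true)) : Clause2 (Fin m × Fin 3)) ∈ Tfml m :=
    (mem_Tfml_iff _).2 ⟨i, Or.inr (Or.inl rfl)⟩
  have mem3 : ((((i, (0:Fin 3)), true), ((i, 2), true)) : Clause2 (Fin m × Fin 3)) ∈ Tfml m :=
    (mem_Tfml_iff _).2 ⟨i, Or.inr (Or.inr rfl)⟩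
  have p01 := pair_true ρ himp i 0 1 mem1
  have p12 := pair_true ρ himp i 1 2 mem2
  have p02 := pair_true ρ himp i 0 2 mem3
  have final : ∀ j : Fin 3, (∀ j', j' ≠ j → ρ (i, j') = some true) →
      ρ (i, j) = none ∧ ∀ j' : Fin 3, j' ≠ j → ρ (i, j') = some true := by
    intro j hoth
    refine ⟨?_, hoth⟩
    by_contra hne
    exact hprime (i, j) hne (unfix_implicant ρ himp i j hoth)
  by_cases e0 : ρ (i, 0) = some true
  · by_cases e1 : ρ (i, 1) = some true
    · refine ⟨2, final 2 ?_⟩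
      intro j' hj'
      fin_cases j'
      · exact e0
      · exact e1
      · exact absurd rfl hj'
    · have e2 := p12.resolve_left e1
      refine ⟨1, final 1 ?_⟩
      intro j' hj'
      fin_cases j'
      · exact e0
      · exact absurd rfl hj'
      · exact e2
  · have e1 := p01.resolve_left e0
    have e2 := p02.resolve_left e0
    refine ⟨0, final 0 ?_⟩
    intro j' hj'
    fin_cases j'
    · exact absurd rfl hj'
    · exact e1
    · exact e2
end

section
/- Let F be a 2-CNF and let S be the set of literals that lie on some directed cycle of the implication digraph D(F). Then for any implicant ρ of F, no literal of S corresponds to a variable left free by ρ. -/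
variable {V : Type*}

theorem cycle_literals_fixed [DecidableEq V] (F : CNF2 V) (hl : looplessD F)
    (hu : ∀ c ∈ F, c.1 ≠ c.2) (ρ : V → Option Bool) (h : implicant2 ρ F) :
    ∀ l : Lit V, onCycle F l → ρ l.1 ≠ none := by
  -- a clause both of whose literals can be falsified yields a forced literal
  have sat_clause : ∀ a b : Lit V,
      (∀ α, extendsR α ρ → evalLit α a = true ∨ evalLit α b = true) →
      a ≠ b → b ≠ negLit a →
      litVal ρ a = some true ∨ litVal ρ b = some true := by
    intro a b hab hne hnneg
    by_contra hcon
    push_neg at hcon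
    obtain ⟨ha, hb⟩ := hcon
    set α : V → Bool := fun x => (ρ x).getD (if x = a.1 then !a.2 else !b.2) with hα
    have hext : extendsR α ρ := by
      intro v bb hv; simp [hα, hv]
    have hea : evalLit α a = false := by
      cases hρa : ρ a.1 with
      | none => simp [evalLit, hα, hρa]
      | some bb =>
        have : (bb == a.2) ≠ true := by
          intro hh
          exact ha (by simp [litVal, hρa, hh])
        simp [evalLit, hα, hρa]
        simpa using this
    have heb : evalLit α b = false := by
      cases hρb : ρ b.1 with
      | none =>
        by_cases hba : b.1 = a.1
        · -- then b = a or b = negLit a, contradiction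
          exfalso
          cases hb2 : b.2 with
          | true =>
            cases ha2 : a.2 with
            | true =>
              exact hne (Prod.ext hba.symm (by rw [hb2, ha2]))
            | false =>
              exact hnneg (Prod.ext hba (by simp [negLit, hb2, ha2]))
          | false =>
            cases ha2 : a.2 with
            | true =>
              exact hnneg (Prod.ext hba (by simp [negLit, hb2, ha2]))
            | false =>
              exact hne (Prod.ext hba.symm (by rw [hb2, ha2]))
        · simp [evalLit, hα, hρb, hba]
      | some bb =>
        have : (bb == b.2) ≠ true := by
          intro hh
          exact hb (by simp [litVal, hρb, hh])
        simp [evalLit, hα, hρb]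
        simpa using this
    rcases hab α hext with hh | hh
    · rw [hea] at hh; exact Bool.false_ne_true hh
    · rw [heb] at hh; exact Bool.false_ne_true hh
  have negval : ∀ a : Lit V, litVal ρ a = some true → litVal ρ (negLit a) = some false := by
    intro a haa
    cases hρa : ρ a.1 with
    | none => simp [litVal, hρa] at haa
    | some bb =>
      simp [litVal, hρa] at haa
      simp [litVal, negLit, hρa, haa]
  have key : ∀ u v, edge F u v → litVal ρ u = some false ∨ litVal ρ v = some true := by
    rintro u v ⟨c, hc, hcase⟩
    have hclause : ∀ α, extendsR α ρ → evalLit α c.1 = true ∨ evalLit α c.2 = true := by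
      intro α hext; exact h α hext c hc
    rcases hcase with ⟨hu1, hv1⟩ | ⟨hu1, hv1⟩
    · -- u = negLit c.1, v = c.2
      have hnneg : c.2 ≠ negLit c.1 := by
        intro heq
        exact hl u ⟨c, hc, Or.inl ⟨hu1, by rw [hu1, heq]⟩⟩
      rcases sat_clause c.1 c.2 hclause (hu c hc) hnneg with h1 | h2
      · left; rw [hu1]; exact negval _ h1
      · right; rw [hv1]; exact h2
    · -- u = negLit c.2, v = c.1
      have hnneg : c.1 ≠ negLit c.2 := by
        intro heq
        exact hl u ⟨c, hc, Or.inr ⟨hu1, by rw [hu1, heq]⟩⟩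
      have hclause' : ∀ α, extendsR α ρ → evalLit α c.2 = true ∨ evalLit α c.1 = true := by
        intro α hext; exact (hclause α hext).symm
      rcases sat_clause c.2 c.1 hclause' (Ne.symm (hu c hc)) hnneg with h1 | h2
      · left; rw [hu1]; exact negval _ h1
      · right; rw [hv1]; exact h2
  have trans : ∀ u v : Lit V, impliesL F u v →
      litVal ρ u = some false ∨ litVal ρ v = some true := by
    intro u v huv
    induction huv with
    | single he => exact key _ _ he
    | tail _ he ih =>
      rcases ih with h1 | h2
      · exact Or.inl h1
      · rcases key _ _ he with h3 | h4
        · rw [h2] at h3; simp at h3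
        · exact Or.inr h4
  intro l hcyc hnone
  rcases trans l l hcyc with hh | hh <;> simp [litVal, hnone] at hh
end

section
/- Let F be a 2-CNF with loopless implication digraph D(F), and let ρ be a restriction inducing a partition of the literals into A_ρ (false literals), B_ρ (true literals), and C_ρ (free literals). Then ρ is an implicant of F if and only if: (1) D(F) has no edge into A_ρ; (2) D(F) has no edge out of B_ρ; and (3) C_ρ is an independent set in D(F). -/
variable {V : Type*}

lemma negLit_negLit (l : Lit V) : negLit (negLit l) = l := by
  simp [negLit]

lemma sat_edge {α : V → Bool} {F : CNF2 V} {u v : Lit V}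
    (hs : sat2 α F) (he : edge F u v) :
    evalLit α (negLit u) = true ∨ evalLit α v = true := by
  obtain ⟨c, hc, ⟨h1, h2⟩ | ⟨h1, h2⟩⟩ := he
  · have h1' : negLit u = c.1 := by rw [h1, negLit_negLit]
    rcases hs c hc with h | h
    · exact Or.inl (h1' ▸ h)
    · exact Or.inr (h2 ▸ h)
  · have h1' : negLit u = c.2 := by rw [h1, negLit_negLit]
    rcases hs c hc with h | h
    · exact Or.inr (h2 ▸ h)
    · exact Or.inl (h1' ▸ h)

lemma litVal_trichotomy (ρ : V → Option Bool) (l : Lit V) :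
    l ∈ Aset ρ ∨ l ∈ Bset ρ ∨ l ∈ Cset ρ := by
  unfold Aset Bset Cset litVal
  cases h : ρ l.1 with
  | none => right; right; show (ρ l.1).map _ = none; rw [h]; rfl
  | some b =>
    cases hb : (b == l.2)
    · left; show (ρ l.1).map (· == l.2) = some false; rw [h]; simp only [Option.map_some]; rw [hb]
    · right; left; show (ρ l.1).map (· == l.2) = some true; rw [h]; simp only [Option.map_some]; rw [hb]

lemma evalLit_of_A {α : V → Bool} {ρ : V → Option Bool} {l : Lit V}
    (hα : extendsR α ρ) (h : l ∈ Aset ρ) : evalLit α l = false := by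
  simp only [Aset, Set.mem_setOf_eq, litVal] at h
  cases hρ : ρ l.1 with
  | none => simp [hρ] at h
  | some b =>
    simp [hρ] at h
    rw [evalLit, hα l.1 b hρ]
    exact beq_eq_false_iff_ne.mpr h

lemma evalLit_of_B {α : V → Bool} {ρ : V → Option Bool} {l : Lit V}
    (hα : extendsR α ρ) (h : l ∈ Bset ρ) : evalLit α l = true := by
  simp only [Bset, Set.mem_setOf_eq, litVal] at h
  cases hρ : ρ l.1 with
  | none => simp [hρ] at h
  | some b =>
    simp [hρ] at h
    rw [evalLit, hα l.1 b hρ]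
    simp [h]

lemma mem_C_iff {ρ : V → Option Bool} {l : Lit V} :
    l ∈ Cset ρ ↔ ρ l.1 = none := by
  simp [Cset, litVal]

lemma neg_mem_A {ρ : V → Option Bool} {l : Lit V} (h : l ∈ Bset ρ) :
    negLit l ∈ Aset ρ := by
  obtain ⟨x, b2⟩ := l
  simp only [Bset, Aset, Set.mem_setOf_eq, litVal, negLit] at *
  cases hρ : ρ x with
  | none => simp [hρ] at h
  | some b => cases b <;> cases b2 <;> simp_all

lemma neg_mem_B {ρ : V → Option Bool} {l : Lit V} (h : l ∈ Aset ρ) :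
    negLit l ∈ Bset ρ := by
  obtain ⟨x, b2⟩ := l
  simp only [Bset, Aset, Set.mem_setOf_eq, litVal, negLit] at *
  cases hρ : ρ x with
  | none => simp [hρ] at h
  | some b => cases b <;> cases b2 <;> simp_all

lemma neg_mem_C {ρ : V → Option Bool} {l : Lit V} (h : l ∈ Cset ρ) :
    negLit l ∈ Cset ρ := by
  rw [mem_C_iff] at *; exact h

lemma A_fst {ρ : V → Option Bool} {l : Lit V} (h : l ∈ Aset ρ) :
    ρ l.1 ≠ none := by
  simp only [Aset, Set.mem_setOf_eq, litVal] at h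
  intro hn; simp [hn] at h

lemma B_fst {ρ : V → Option Bool} {l : Lit V} (h : l ∈ Bset ρ) :
    ρ l.1 ≠ none := by
  simp only [Bset, Set.mem_setOf_eq, litVal] at h
  intro hn; simp [hn] at h

lemma extendsR_base (ρ : V → Option Bool) :
    extendsR (fun v => (ρ v).getD false) ρ := by
  intro v b h; simp [h]

lemma extendsR_update [DecidableEq V] {α : V → Bool} {ρ : V → Option Bool}
    (hα : extendsR α ρ) {x : V} (hx : ρ x = none) (b : Bool) :
    extendsR (Function.update α x b) ρ := by
  intro v b' h
  by_cases hv : v = x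
  · subst hv; rw [hx] at h; exact absurd h (by simp)
  · rw [Function.update_of_ne hv]; exact hα v b' h

theorem implicant_characterization [DecidableEq V] (F : CNF2 V) (hl : looplessD F)
    (ρ : V → Option Bool) :
    implicant2 ρ F ↔
      ((∀ u v, edge F u v → v ∈ Aset ρ → u ∈ Aset ρ) ∧
       (∀ u v, edge F u v → u ∈ Bset ρ → v ∈ Bset ρ) ∧
       (∀ u ∈ Cset ρ, ∀ v ∈ Cset ρ, ¬ edge F u v)) := by
  constructor
  · intro hI
    refine ⟨?_, ?_, ?_⟩
    · intro u v he hv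
      rcases litVal_trichotomy ρ u with hu | hu | hu
      · exact hu
      · exfalso
        set α := fun w => (ρ w).getD false with hαdef
        have hα := extendsR_base ρ
        rcases sat_edge (hI α hα) he with h | h
        · rw [evalLit_of_A hα (neg_mem_A hu)] at h; exact Bool.false_ne_true h
        · rw [evalLit_of_A hα hv] at h; exact Bool.false_ne_true h
      · exfalso
        have hun : ρ u.1 = none := mem_C_iff.mp hu
        set α := Function.update (fun w => (ρ w).getD false) u.1 u.2 with hαdef
        have hα : extendsR α ρ := extendsR_update (extendsR_base ρ) hun u.2
        have hne : v.1 ≠ u.1 := by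
          intro h; exact A_fst hv (h ▸ hun)
        rcases sat_edge (hI α hα) he with h | h
        · rw [evalLit, negLit] at h
          simp only [hαdef, Function.update_self] at h
          simp at h
        · rw [evalLit_of_A hα hv] at h; exact Bool.false_ne_true h
    · intro u v he hu
      rcases litVal_trichotomy ρ v with hv | hv | hv
      · exfalso
        have hα := extendsR_base ρ
        rcases sat_edge (hI _ hα) he with h | h
        · rw [evalLit_of_A hα (neg_mem_A hu)] at h; exact Bool.false_ne_true h
        · rw [evalLit_of_A hα hv] at h; exact Bool.false_ne_true h
      · exact hv
      · exfalso
        have hvn : ρ v.1 = none := mem_C_iff.mp hv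
        set α := Function.update (fun w => (ρ w).getD false) v.1 (!v.2) with hαdef
        have hα : extendsR α ρ := extendsR_update (extendsR_base ρ) hvn (!v.2)
        rcases sat_edge (hI α hα) he with h | h
        · rw [evalLit_of_A hα (neg_mem_A hu)] at h; exact Bool.false_ne_true h
        · rw [evalLit] at h
          simp only [hαdef, Function.update_self] at h
          simp at h
    · intro u hu v hv he
      have hun : ρ u.1 = none := mem_C_iff.mp hu
      have hvn : ρ v.1 = none := mem_C_iff.mp hv
      set α := Function.update (Function.update (fun w => (ρ w).getD false) u.1 u.2) v.1 (!v.2)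
        with hαdef
      have hα : extendsR α ρ :=
        extendsR_update (extendsR_update (extendsR_base ρ) hun u.2) hvn (!v.2)
      have hαu : α u.1 = u.2 := by
        by_cases h : u.1 = v.1
        · have hne : u ≠ v := by rintro rfl; exact hl u he
          have : u.2 ≠ v.2 := by
            intro h2; exact hne (Prod.ext h h2)
          rw [hαdef, ← h, Function.update_self]
          cases hu2 : u.2 <;> cases hv2 : v.2 <;> simp_all
        · rw [hαdef, Function.update_of_ne (Ne.symm fun hh => h hh.symm),
            Function.update_self]
      rcases sat_edge (hI α hα) he with h | h
      · rw [evalLit, negLit] at h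
        simp only at h
        rw [hαu] at h
        simp at h
      · rw [evalLit] at h
        simp only [hαdef, Function.update_self] at h
        simp at h
  · rintro ⟨h1, h2, h3⟩ α hα c hc
    have e1 : edge F (negLit c.1) c.2 := ⟨c, hc, Or.inl ⟨rfl, rfl⟩⟩
    rcases litVal_trichotomy ρ c.1 with hc1 | hc1 | hc1
    · have : negLit c.1 ∈ Bset ρ := neg_mem_B hc1
      exact Or.inr (evalLit_of_B hα (h2 _ _ e1 this))
    · exact Or.inl (evalLit_of_B hα hc1)
    · rcases litVal_trichotomy ρ c.2 with hc2 | hc2 | hc2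
      · exfalso
        have := h1 _ _ e1 hc2
        have hC := neg_mem_C hc1
        rw [mem_C_iff] at hC
        exact A_fst this hC
      · exact Or.inr (evalLit_of_B hα hc2)
      · exact absurd e1 (h3 _ (neg_mem_C hc1) _ hc2)
end

section
/- Let t be the number of distinct variables of a 2-CNF F that appear in some directed cycle of D(F), where D(F) is loopless and every such cycle contains at least 2 distinct variables. Then the number of ways to assign truth values to these t variables consistently with all cycle constraints (all literals on a common cycle take equal value) is at most 2^{t/2}. -/
variable {V : Type*}

lemma myEdgeNeg {F : CNF2 V} {u v : Lit V} (h : edge F u v) :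
    edge F (negLit v) (negLit u) := by
  obtain ⟨c, hc, h1 | h1⟩ := h
  · refine ⟨c, hc, Or.inr ⟨?_, ?_⟩⟩
    · rw [h1.2]
    · rw [h1.1]; simp [negLit]
  · refine ⟨c, hc, Or.inl ⟨?_, ?_⟩⟩
    · rw [h1.2]
    · rw [h1.1]; simp [negLit]

lemma myImpNeg {F : CNF2 V} {u v : Lit V} (h : impliesL F u v) :
    impliesL F (negLit v) (negLit u) := by
  induction h with
  | single h => exact Relation.TransGen.single (myEdgeNeg h)
  | tail _ h2 ih => exact Relation.TransGen.head (myEdgeNeg h2) ih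

set_option maxHeartbeats 1000000 in
theorem cycle_assignment_count {n : ℕ} (F : CNF2 (Fin n)) (hl : looplessD F)
    (h2 : ∀ u : Lit (Fin n), onCycle F u →
      ∃ v : Lit (Fin n), impliesL F u v ∧ impliesL F v u ∧ v.1 ≠ u.1) :
    (((fun (α : Fin n → Bool) (x : {x : Fin n // ∃ b, onCycle F (x, b)}) => α x.1) ''
        {α : Fin n → Bool |
          ∀ u v : Lit (Fin n), impliesL F u v → impliesL F v u →
            evalLit α u = evalLit α v}).ncard : ℝ)
      ≤ (2 : ℝ) ^ (({x : Fin n | ∃ b, onCycle F (x, b)}.ncard : ℝ) / 2) := by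
  classical
  set S : Set (Fin n) := {x : Fin n | ∃ b, onCycle F (x, b)} with hS
  set T := {x : Fin n // ∃ b, onCycle F (x, b)} with hT
  set A : Set (Fin n → Bool) := {α : Fin n → Bool |
          ∀ u v : Lit (Fin n), impliesL F u v → impliesL F v u →
            evalLit α u = evalLit α v} with hA
  set I : Set (T → Bool) :=
    ((fun (α : Fin n → Bool) (x : T) => α x.1) '' A) with hI
  let Mut : Fin n → Bool → Fin n → Bool → Prop := fun a p b q =>
    impliesL F (a, p) (b, q) ∧ impliesL F (b, q) (a, p)
  have mutNeg : ∀ {a p b q}, Mut a p b q → Mut a (!p) b (!q) := by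
    rintro a p b q ⟨hu, hv⟩
    exact ⟨myImpNeg hv, myImpNeg hu⟩
  let r : T → T → Prop := fun x y => ∃ p q, Mut x.1 p y.1 q
  have hrefl : ∀ x, r x x := by
    rintro ⟨x, b, hb⟩; exact ⟨b, b, hb, hb⟩
  have hsymm : ∀ {x y}, r x y → r y x := by
    rintro x y ⟨p, q, h1, h2⟩; exact ⟨q, p, h2, h1⟩
  have htrans : ∀ {x y z}, r x y → r y z → r x z := by
    rintro x y z ⟨p, q, hxy⟩ ⟨q', s, hyz⟩
    by_cases hq : q' = q
    · subst hq; exact ⟨p, s, hxy.1.trans hyz.1, hyz.2.trans hxy.2⟩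
    · have hq' : q' = !q := by cases q <;> cases q' <;> simp_all
      subst hq'
      have hxy' := mutNeg hxy
      exact ⟨!p, s, hxy'.1.trans hyz.1, hyz.2.trans hxy'.2⟩
  let sq : Setoid T := ⟨r, hrefl, @hsymm, @htrans⟩
  let Q := Quotient sq
  have hQfin : Finite Q := Quotient.finite sq
  let _ : Fintype Q := Fintype.ofFinite Q
  let Φ : (T → Bool) → (Q → Bool) := fun g q => g (Quotient.out q)
  -- key: consistent assignments are determined by values on class representatives
  have hinj : Set.InjOn Φ I := by
    rintro g1 ⟨α1, hα1, rfl⟩ g2 ⟨α2, hα2, rfl⟩ h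
    funext x
    set y : T := Quotient.out (Quotient.mk sq x) with hy
    have hxy : r x y := hsymm (Quotient.mk_out x)
    obtain ⟨p, q, hm⟩ := hxy
    have e1 : evalLit α1 (x.1, p) = evalLit α1 (y.1, q) := hα1 _ _ hm.1 hm.2
    have e2 : evalLit α2 (x.1, p) = evalLit α2 (y.1, q) := hα2 _ _ hm.1 hm.2
    have hyeq : α1 y.1 = α2 y.1 := congrFun h (Quotient.mk sq x)
    simp only [evalLit] at e1 e2
    show α1 x.1 = α2 x.1
    rw [hyeq] at e1
    have e3 : (α1 x.1 == p) = (α2 x.1 == p) := by rw [e1, ← e2]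
    revert e3
    cases α1 x.1 <;> cases α2 x.1 <;> cases p <;> simp
  have card1 : I.ncard ≤ 2 ^ Fintype.card Q := by
    calc I.ncard = (Φ '' I).ncard := (Set.ncard_image_of_injOn hinj).symm
      _ ≤ (Set.univ : Set (Q → Bool)).ncard :=
          Set.ncard_le_ncard (Set.subset_univ _) Set.finite_univ
      _ = Nat.card (Q → Bool) := Set.ncard_univ _
      _ = 2 ^ Fintype.card Q := by
          rw [Nat.card_eq_fintype_card, Fintype.card_fun, Fintype.card_bool]
  -- each class has two distinct variables
  have hpair : ∀ q : Q, ∃ y : T, r q.out y ∧ y ≠ q.out := by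
    intro q
    obtain ⟨b, hb⟩ := q.out.2
    obtain ⟨v, hv1, hv2, hv3⟩ := h2 (q.out.1, b) hb
    have hvS : ∃ b', onCycle F (v.1, b') := ⟨v.2, hv2.trans hv1⟩
    refine ⟨⟨v.1, hvS⟩, ⟨b, v.2, hv1, hv2⟩, ?_⟩
    intro hcon
    exact hv3 (congrArg Subtype.val hcon)
  choose other hother1 hother2 using hpair
  let ψ : Q × Bool → T := fun p => if p.2 then p.1.out else other p.1
  have hclass : ∀ p : Q × Bool, Quotient.mk sq (ψ p) = p.1 := by
    rintro ⟨q, b⟩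
    cases b
    · show Quotient.mk sq (other q) = q
      have h1 : Quotient.mk sq (other q) = Quotient.mk sq q.out :=
        Quotient.sound (hsymm (hother1 q))
      rw [h1, Quotient.out_eq]
    · show Quotient.mk sq q.out = q
      exact Quotient.out_eq q
  have hψinj : Function.Injective ψ := by
    rintro ⟨q1, b1⟩ ⟨q2, b2⟩ h
    have hq : q1 = q2 :=
      (hclass (q1, b1)).symm.trans ((congrArg (Quotient.mk sq) h).trans (hclass (q2, b2)))
    subst hq
    have hb : b1 = b2 := by
      cases b1 <;> cases b2
      · rfl
      · simp only [ψ] at h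
        simp only [show ((q1, true) : Q × Bool).2 = true from rfl,
          show ((q1, false) : Q × Bool).2 = false from rfl, if_true,
          Bool.false_eq_true, if_false] at h
        first
        | exact absurd h (hother2 q1)
        | exact absurd h.symm (hother2 q1)
      · simp only [ψ] at h
        simp only [show ((q1, true) : Q × Bool).2 = true from rfl,
          show ((q1, false) : Q × Bool).2 = false from rfl, if_true,
          Bool.false_eq_true, if_false] at h
        first
        | exact absurd h (hother2 q1)
        | exact absurd h.symm (hother2 q1)
      · rfl
    rw [hb]
  have card2 : 2 * Fintype.card Q ≤ S.ncard := by
    have hle : Nat.card (Q × Bool) ≤ Nat.card T :=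
      Nat.card_le_card_of_injective ψ hψinj
    have hQB : Nat.card (Q × Bool) = 2 * Fintype.card Q := by
      rw [Nat.card_eq_fintype_card, Fintype.card_prod, Fintype.card_bool, Nat.mul_comm]
    have hTS : Nat.card T = S.ncard := Nat.card_coe_set_eq S
    omega
  -- finish with real arithmetic
  have hcast : (I.ncard : ℝ) ≤ (2 : ℝ) ^ (Fintype.card Q : ℕ) := by
    calc (I.ncard : ℝ) ≤ ((2 ^ Fintype.card Q : ℕ) : ℝ) := by exact_mod_cast card1
      _ = (2 : ℝ) ^ (Fintype.card Q : ℕ) := by push_cast; ring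
  have hexp : ((Fintype.card Q : ℕ) : ℝ) ≤ (S.ncard : ℝ) / 2 := by
    have : (2 * Fintype.card Q : ℝ) ≤ (S.ncard : ℝ) := by exact_mod_cast card2
    linarith
  calc (I.ncard : ℝ) ≤ (2 : ℝ) ^ (Fintype.card Q : ℕ) := hcast
    _ = (2 : ℝ) ^ ((Fintype.card Q : ℕ) : ℝ) := (Real.rpow_natCast 2 _).symm
    _ ≤ (2 : ℝ) ^ ((S.ncard : ℝ) / 2) :=
        Real.rpow_le_rpow_of_exponent_le one_le_two hexp
end
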